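/- Lemma 5 (strong duality for the Wasserstein-distance uncertainty set). Let (S,d) be a nonempty finite metric space, l ∈ [1,∞), δ > 0, p ∈ Δ(S), and V : S → ℝ. Define the l-Wasserstein distance between q, p ∈ Δ(S) as W_l(q,p) := inf over couplings μ of (p,q) of (Σ_{x,y} μ(x,y)·d(x,y)^l)^{1/l}, where a coupling is a probability distribution on S×S whose two marginals are p and q respectively. Then min over q ∈ Δ(S) with W_l(p,q) ≤ δ of q·V equals sup_{λ ≥ 0} (−λ·δ^l + Σ_x p(x)·min_{y ∈ S}(V(y) + λ·d(x,y)^l)). -/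

import Mathlib

open Finset

noncomputable def wassersteinDist {S : Type*} [Fintype S] [MetricSpace S]
    (l : ℝ) (p q : S → ℝ) : ℝ :=
  sInf {w : ℝ | ∃ μ : S → S → ℝ,
    (∀ x y, 0 ≤ μ x y) ∧ (∀ x, ∑ y, μ x y = p x) ∧ (∀ y, ∑ x, μ x y = q y) ∧
    w = (∑ x, ∑ y, μ x y * dist x y ^ l) ^ (1 / l)}

theorem wasserstein_strong_duality
    {S : Type*} [Fintype S] [Nonempty S] [MetricSpace S]
    (l : ℝ) (hl : 1 ≤ l) (δ : ℝ) (hδ : 0 < δ)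
    (p : S → ℝ) (hp : (∀ s, 0 ≤ p s) ∧ ∑ s, p s = 1)
    (V : S → ℝ) :
    sInf {z : ℝ | ∃ q : S → ℝ, ((∀ s, 0 ≤ q s) ∧ ∑ s, q s = 1) ∧
        wassersteinDist l p q ≤ δ ∧ z = ∑ s, q s * V s}
      = sSup {z : ℝ | ∃ lam : ℝ, 0 ≤ lam ∧
          z = -lam * δ ^ l + ∑ x, p x * Finset.univ.inf' Finset.univ_nonempty
                (fun y => V y + lam * dist x y ^ l)} := by
  classical
  obtain ⟨hp0, hp1⟩ := hp
  have hl0 : (0:ℝ) < l := lt_of_lt_of_le one_pos hl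
  have hlne : l ≠ 0 := ne_of_gt hl0
  have hδl : (0:ℝ) < δ ^ l := Real.rpow_pos_of_pos hδ l
  set m : S → ℝ → ℝ := fun x lam =>
    Finset.univ.inf' Finset.univ_nonempty (fun y => V y + lam * dist x y ^ l) with hm
  set g : ℝ → ℝ := fun lam => -lam * δ ^ l + ∑ x, p x * m x lam with hg
  -- basic facts about m
  have hmle : ∀ x (lam : ℝ) (y : S), m x lam ≤ V y + lam * dist x y ^ l := by
    intro x lam y
    exact Finset.inf'_le _ (mem_univ y)
  have hdl0 : ∀ x y : S, (0:ℝ) ≤ dist x y ^ l := fun x y => Real.rpow_nonneg dist_nonneg l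
  -- weak duality
  have key : ∀ q : S → ℝ, (∀ s, 0 ≤ q s) → (∑ s, q s = 1) →
      wassersteinDist l p q ≤ δ → ∀ lam : ℝ, 0 ≤ lam → g lam ≤ ∑ s, q s * V s := by
    intro q hq0 hq1 hW lam hlam
    rw [wassersteinDist] at hW
    have main : ∀ w : ℝ, δ < w →
        g lam ≤ (∑ s, q s * V s) + lam * (w ^ l - δ ^ l) := by
      intro w hw
      have hWne : {w : ℝ | ∃ μ : S → S → ℝ,
          (∀ x y, 0 ≤ μ x y) ∧ (∀ x, ∑ y, μ x y = p x) ∧ (∀ y, ∑ x, μ x y = q y) ∧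
          w = (∑ x, ∑ y, μ x y * dist x y ^ l) ^ (1 / l)}.Nonempty := by
        refine ⟨_, fun x y => p x * q y, fun x y => mul_nonneg (hp0 x) (hq0 y), ?_, ?_, rfl⟩
        · intro x; rw [← Finset.mul_sum, hq1, mul_one]
        · intro y; rw [← Finset.sum_mul, hp1, one_mul]
      obtain ⟨w', ⟨μ, hμ0, hμrow, hμcol, hw'eq⟩, hw'lt⟩ :=
        exists_lt_of_csInf_lt hWne (lt_of_le_of_lt hW hw)
      set cost := ∑ x, ∑ y, μ x y * dist x y ^ l with hcostdef
      have hcost0 : (0:ℝ) ≤ cost :=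
        Finset.sum_nonneg fun x _ => Finset.sum_nonneg fun y _ =>
          mul_nonneg (hμ0 x y) (hdl0 x y)
      have hw'0 : 0 ≤ w' := hw'eq ▸ Real.rpow_nonneg hcost0 _
      have hcosteq : cost = w' ^ l := by
        rw [hw'eq, one_div, Real.rpow_inv_rpow hcost0 hlne]
      have hcostle : cost ≤ w ^ l := by
        rw [hcosteq]; exact Real.rpow_le_rpow hw'0 hw'lt.le hl0.le
      have hqV : ∑ s, q s * V s = ∑ x, ∑ y, μ x y * V y := by
        calc ∑ s, q s * V s = ∑ y, (∑ x, μ x y) * V y :=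
              Finset.sum_congr rfl fun y _ => by rw [hμcol y]
          _ = ∑ y, ∑ x, μ x y * V y :=
              Finset.sum_congr rfl fun y _ => Finset.sum_mul ..
          _ = ∑ x, ∑ y, μ x y * V y := Finset.sum_comm
      have hlower : ∑ x, p x * m x lam ≤ (∑ x, ∑ y, μ x y * V y) + lam * cost := by
        have hx : ∀ x ∈ Finset.univ, p x * m x lam
            ≤ ∑ y, μ x y * (V y + lam * dist x y ^ l) := by
          intro x _
          calc p x * m x lam = ∑ y, μ x y * m x lam := by
                rw [← Finset.sum_mul, hμrow x]
            _ ≤ ∑ y, μ x y * (V y + lam * dist x y ^ l) :=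
                Finset.sum_le_sum fun y _ =>
                  mul_le_mul_of_nonneg_left (hmle x lam y) (hμ0 x y)
        calc ∑ x, p x * m x lam
            ≤ ∑ x, ∑ y, μ x y * (V y + lam * dist x y ^ l) := Finset.sum_le_sum hx
          _ = (∑ x, ∑ y, μ x y * V y) + lam * cost := by
              rw [hcostdef, Finset.mul_sum, ← Finset.sum_add_distrib]
              refine Finset.sum_congr rfl fun x _ => ?_
              rw [Finset.mul_sum, ← Finset.sum_add_distrib]
              exact Finset.sum_congr rfl fun y _ => by ring
      have hcc : lam * cost ≤ lam * w ^ l := mul_le_mul_of_nonneg_left hcostle hlam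
      have hgdef : g lam = -lam * δ ^ l + ∑ x, p x * m x lam := rfl
      rw [hqV]
      linarith
    have htend : Filter.Tendsto (fun w : ℝ => (∑ s, q s * V s) + lam * (w ^ l - δ ^ l))
        (nhdsWithin δ (Set.Ioi δ)) (nhds (∑ s, q s * V s)) := by
      have h2 : ContinuousAt (fun w : ℝ => w ^ l) δ :=
        Real.continuousAt_rpow_const δ l (Or.inl (ne_of_gt hδ))
      have h1 : ContinuousAt (fun w : ℝ => (∑ s, q s * V s) + lam * (w ^ l - δ ^ l)) δ :=
        continuousAt_const.add (continuousAt_const.mul (h2.sub continuousAt_const))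
      have h3 := (h1.continuousWithinAt (s := Set.Ioi δ)).tendsto
      simpa using h3
    exact ge_of_tendsto htend
      (Filter.eventually_of_mem self_mem_nhdsWithin fun w hw => main w hw)
  -- existence of dual maximizer
  obtain ⟨lam0, hlam0, hmax⟩ : ∃ lam0 : ℝ, 0 ≤ lam0 ∧ ∀ lam : ℝ, 0 ≤ lam → g lam ≤ g lam0 := by
    have hcontg : Continuous g := by
      refine Continuous.add (by continuity) ?_
      refine continuous_finset_sum _ fun x _ => Continuous.mul continuous_const ?_
      exact Continuous.finset_inf'_apply Finset.univ_nonempty fun y _ => by continuity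
    have hub : ∀ lam : ℝ, g lam ≤ (∑ x, p x * V x) - lam * δ ^ l := by
      intro lam
      have hx : ∀ x ∈ Finset.univ, p x * m x lam ≤ p x * V x := by
        intro x _
        refine mul_le_mul_of_nonneg_left ?_ (hp0 x)
        have := hmle x lam x
        simpa [dist_self, Real.zero_rpow hlne] using this
      have := Finset.sum_le_sum hx
      have hgdef : g lam = -lam * δ ^ l + ∑ x, p x * m x lam := rfl
      linarith
    set M : ℝ := max 0 ((∑ x, p x * V x - g 0) / δ ^ l) with hMdef
    have hM0 : (0:ℝ) ≤ M := le_max_left _ _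
    obtain ⟨lam0, hlam0mem, hlam0max⟩ :=
      (isCompact_Icc (a := (0:ℝ)) (b := M)).exists_isMaxOn
        ⟨0, Set.mem_Icc.mpr ⟨le_rfl, hM0⟩⟩ hcontg.continuousOn
    refine ⟨lam0, hlam0mem.1, fun lam hlam => ?_⟩
    by_cases hcase : lam ≤ M
    · exact hlam0max (Set.mem_Icc.mpr ⟨hlam, hcase⟩)
    · push_neg at hcase
      have h1 : (∑ x, p x * V x - g 0) / δ ^ l ≤ M := le_max_right _ _
      have h2 : ∑ x, p x * V x - g 0 ≤ M * δ ^ l := by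
        rw [div_le_iff₀ hδl] at h1; linarith
      have h3 : g lam ≤ g 0 := by
        have := hub lam
        have h4 : M * δ ^ l ≤ lam * δ ^ l :=
          mul_le_mul_of_nonneg_right hcase.le hδl.le
        linarith
      exact le_trans h3 (hlam0max (Set.mem_Icc.mpr ⟨le_rfl, hM0⟩))
  -- affine function machinery
  set c : (S → S) → ℝ := fun σ => ∑ x, p x * dist x (σ x) ^ l with hc
  set G : (S → S) → ℝ → ℝ := fun σ lam =>
    -lam * δ ^ l + ∑ x, p x * (V (σ x) + lam * dist x (σ x) ^ l) with hG
  have hGaff : ∀ (σ : S → S) (lam : ℝ),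
      G σ lam = (∑ x, p x * V (σ x)) + lam * (c σ - δ ^ l) := by
    intro σ lam
    simp only [hG, hc, Finset.mul_sum, mul_sub]
    rw [Finset.sum_congr rfl (fun x _ => by ring :
      ∀ x ∈ Finset.univ, p x * (V (σ x) + lam * dist x (σ x) ^ l)
        = p x * V (σ x) + lam * (p x * dist x (σ x) ^ l))]
    rw [Finset.sum_add_distrib, ← Finset.mul_sum]
    ring
  have hGle : ∀ (σ : S → S) (lam : ℝ), g lam ≤ G σ lam := by
    intro σ lam
    have : ∀ x ∈ Finset.univ, p x * m x lam ≤ p x * (V (σ x) + lam * dist x (σ x) ^ l) :=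
      fun x _ => mul_le_mul_of_nonneg_left (hmle x lam (σ x)) (hp0 x)
    exact (add_le_add_iff_left _).mpr (Finset.sum_le_sum this)
  have hGex : ∀ lam : ℝ, ∃ σ : S → S, g lam = G σ lam := by
    intro lam
    choose σ hσ hσeq using fun x =>
      Finset.exists_mem_eq_inf' (Finset.univ_nonempty (α := S))
        (fun y => V y + lam * dist x y ^ l)
    exact ⟨σ, by simp only [hg, hG, hm]; rw [Finset.sum_congr rfl fun x _ => by rw [hσeq x]]⟩
  -- shared machinery for the two claims
  obtain ⟨ε, hεpos, hεle⟩ : ∃ ε : ℝ, 0 < ε ∧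
      ∀ σ : S → S, G σ lam0 ≠ g lam0 → ε ≤ G σ lam0 - g lam0 := by
    refine ⟨Finset.univ.inf' Finset.univ_nonempty
      (fun σ : S → S => if G σ lam0 = g lam0 then (1:ℝ) else G σ lam0 - g lam0), ?_, ?_⟩
    · obtain ⟨σ0, -, hσ0⟩ := Finset.exists_mem_eq_inf' (Finset.univ_nonempty (α := S → S))
        (fun σ : S → S => if G σ lam0 = g lam0 then (1:ℝ) else G σ lam0 - g lam0)
      rw [hσ0]
      split
      · norm_num
      · have h1 := hGle σ0 lam0
        have h2 : g lam0 < G σ0 lam0 := lt_of_le_of_ne h1 (Ne.symm (by assumption))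
        linarith
    · intro σ hne
      have := Finset.inf'_le (b := σ)
        (fun σ : S → S => if G σ lam0 = g lam0 then (1:ℝ) else G σ lam0 - g lam0) (mem_univ σ)
      rw [if_neg hne] at this
      exact this
  obtain ⟨K, hKpos, hKge⟩ : ∃ K : ℝ, 0 < K ∧ ∀ σ : S → S, |c σ - δ ^ l| ≤ K := by
    refine ⟨Finset.univ.sup' Finset.univ_nonempty (fun σ : S → S => |c σ - δ ^ l|) + 1, ?_, ?_⟩
    · have h1 := abs_nonneg (c id - δ ^ l)
      have h2 := Finset.le_sup' (fun σ : S → S => |c σ - δ ^ l|) (mem_univ (id : S → S))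
      linarith
    · intro σ
      have := Finset.le_sup' (fun σ : S → S => |c σ - δ ^ l|) (mem_univ σ)
      linarith
  have hεK : (0:ℝ) < ε / (2 * K) := div_pos hεpos (by linarith)
  have hεKK : ε / (2 * K) * K < ε := by
    have hK0 : (2:ℝ) * K ≠ 0 := by positivity
    have : ε / (2 * K) * K = ε / 2 := by field_simp
    rw [this]; linarith
  -- claim 1 : exists active σ with c σ ≤ δ ^ l
  have claim1 : ∃ σ : S → S, G σ lam0 = g lam0 ∧ c σ ≤ δ ^ l := by
    by_contra hno
    push_neg at hno
    obtain ⟨σh, hσh⟩ := hGex (lam0 + ε / (2 * K))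
    set h : ℝ := ε / (2 * K) with hhdef
    have hle : g (lam0 + h) ≤ g lam0 := hmax _ (by linarith)
    have hstep : G σh (lam0 + h) = G σh lam0 + h * (c σh - δ ^ l) := by
      rw [hGaff, hGaff]; ring
    have hKey : g lam0 < G σh (lam0 + h) := by
      by_cases hact : G σh lam0 = g lam0
      · have hcσ := hno σh hact
        have : 0 < h * (c σh - δ ^ l) := mul_pos hεK (by linarith)
        rw [hstep, hact]; linarith
      · have h1 := hεle σh hact
        have h2 : -(h * K) ≤ h * (c σh - δ ^ l) := by
          have h4 : -K ≤ c σh - δ ^ l := (abs_le.mp (hKge σh)).1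
          have h5 := mul_le_mul_of_nonneg_left h4 hεK.le
          have h6 : h * -K = -(h * K) := by ring
          linarith
        rw [hstep]; linarith
    rw [← hσh] at hKey; linarith
  -- claim 2
  have claim2 : 0 < lam0 → ∃ σ : S → S, G σ lam0 = g lam0 ∧ δ ^ l ≤ c σ := by
    intro hpos
    by_contra hno
    push_neg at hno
    set h : ℝ := min (ε / (2 * K)) lam0 with hhdef
    have hh : 0 < h := lt_min hεK hpos
    have hεKK' : ε / (2 * K) * K < ε := hεKK
    have hhlam : h ≤ lam0 := min_le_right _ _
    have hhK : h * K < ε := by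
      have h1 : h ≤ ε / (2 * K) := min_le_left _ _
      have h2 : h * K ≤ ε / (2 * K) * K := mul_le_mul_of_nonneg_right h1 hKpos.le
      linarith
    obtain ⟨σh, hσh⟩ := hGex (lam0 - h)
    have hle : g (lam0 - h) ≤ g lam0 := hmax _ (by linarith)
    have hstep : G σh (lam0 - h) = G σh lam0 - h * (c σh - δ ^ l) := by
      rw [hGaff, hGaff]; ring
    have hKey : g lam0 < G σh (lam0 - h) := by
      by_cases hact : G σh lam0 = g lam0
      · have hcσ := hno σh hact
        have h5 : 0 < h * (δ ^ l - c σh) := mul_pos hh (by linarith)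
        have h6 : h * (δ ^ l - c σh) = -(h * (c σh - δ ^ l)) := by ring
        rw [hstep, hact]; linarith
      · have h1 := hεle σh hact
        have h2 : h * (c σh - δ ^ l) ≤ h * K :=
          mul_le_mul_of_nonneg_left (le_trans (le_abs_self _) (hKge σh)) hh.le
        rw [hstep]; linarith
    rw [← hσh] at hKey; linarith
  obtain ⟨σp, hσpact, hσpc⟩ := claim1
  obtain ⟨σm, hσmact, hσmc⟩ : ∃ σ : S → S, G σ lam0 = g lam0 ∧ (0 < lam0 → δ ^ l ≤ c σ) := by
    rcases eq_or_lt_of_le hlam0 with h | h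
    · exact ⟨σp, hσpact, fun h' => absurd h' (by simp [← h])⟩
    · obtain ⟨σ, h1, h2⟩ := claim2 h
      exact ⟨σ, h1, fun _ => h2⟩
  -- choose θ
  obtain ⟨θ, hθ0, hθ1, hcombo_le, hcombo_eq⟩ :
      ∃ θ : ℝ, 0 ≤ θ ∧ θ ≤ 1 ∧ θ * c σm + (1 - θ) * c σp ≤ δ ^ l ∧
        lam0 * (θ * c σm + (1 - θ) * c σp) = lam0 * δ ^ l := by
    rcases eq_or_lt_of_le hlam0 with h | h
    · exact ⟨0, le_refl _, zero_le_one, by simpa using hσpc, by rw [← h]; ring⟩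
    · have hcm := hσmc h
      rcases le_or_gt (c σm) (c σp) with hle | hlt
      · have h1 : c σp = δ ^ l := le_antisymm hσpc (le_trans hcm hle)
        exact ⟨0, le_refl _, zero_le_one, by simp [h1], by simp [h1]⟩
      · have hne : c σm - c σp ≠ 0 := ne_of_gt (by linarith)
        have hval : (δ ^ l - c σp) / (c σm - c σp) * c σm
            + (1 - (δ ^ l - c σp) / (c σm - c σp)) * c σp = δ ^ l := by
          have h1 : (δ ^ l - c σp) / (c σm - c σp) * (c σm - c σp) = δ ^ l - c σp :=
            div_mul_cancel₀ _ hne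
          have h2 : (δ ^ l - c σp) / (c σm - c σp) * c σm
              + (1 - (δ ^ l - c σp) / (c σm - c σp)) * c σp
              = (δ ^ l - c σp) / (c σm - c σp) * (c σm - c σp) + c σp := by ring
          rw [h2, h1]; ring
        exact ⟨(δ ^ l - c σp) / (c σm - c σp), div_nonneg (by linarith) (by linarith),
          by rw [div_le_one (by linarith)]; linarith, le_of_eq hval, by rw [hval]⟩
  -- build the primal optimal coupling and measure
  set μs : S → S → ℝ := fun x y =>
    p x * (θ * (if y = σm x then 1 else 0) + (1 - θ) * (if y = σp x then 1 else 0)) with hμs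
  set qs : S → ℝ := fun y => ∑ x, μs x y with hqs
  have hite : ∀ a b : S, (0:ℝ) ≤ if a = b then 1 else 0 := fun a b => by split <;> norm_num
  have hμs0 : ∀ x y, 0 ≤ μs x y := by
    intro x y
    exact mul_nonneg (hp0 x) (add_nonneg (mul_nonneg hθ0 (hite _ _))
      (mul_nonneg (by linarith) (hite _ _)))
  have hμsrow : ∀ x, ∑ y, μs x y = p x := by
    intro x
    simp only [hμs]
    rw [← Finset.mul_sum, Finset.sum_add_distrib, ← Finset.mul_sum, ← Finset.mul_sum]
    simp
  have hqs0 : ∀ y, 0 ≤ qs y := fun y => Finset.sum_nonneg fun x _ => hμs0 x y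
  have hqs1 : ∑ y, qs y = 1 := by
    simp only [hqs]
    rw [Finset.sum_comm]
    simp [hμsrow, hp1]
  -- cost computation
  have hrowsum : ∀ (f : S → S → ℝ), ∀ x, ∑ y, μs x y * f x y
      = p x * (θ * f x (σm x) + (1 - θ) * f x (σp x)) := by
    intro f x
    simp only [hμs]
    rw [Finset.sum_congr rfl (fun y _ => by ring :
      ∀ y ∈ Finset.univ, p x * (θ * (if y = σm x then 1 else 0)
          + (1 - θ) * (if y = σp x then 1 else 0)) * f x y
        = p x * θ * ((if y = σm x then 1 else 0) * f x y)
          + p x * (1 - θ) * ((if y = σp x then 1 else 0) * f x y))]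
    rw [Finset.sum_add_distrib, ← Finset.mul_sum, ← Finset.mul_sum]
    simp only [ite_mul, one_mul, zero_mul]
    rw [Finset.sum_ite_eq' Finset.univ (σm x) (f x), Finset.sum_ite_eq' Finset.univ (σp x) (f x)]
    simp only [mem_univ, if_pos]
    ring
  have hcost : ∑ x, ∑ y, μs x y * dist x y ^ l = θ * c σm + (1 - θ) * c σp := by
    rw [Finset.sum_congr rfl fun x _ => hrowsum (fun x y => dist x y ^ l) x]
    simp only [hc, Finset.mul_sum]
    rw [Finset.sum_congr rfl (fun x _ => by ring :
      ∀ x ∈ Finset.univ, p x * (θ * dist x (σm x) ^ l + (1 - θ) * dist x (σp x) ^ l)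
        = θ * (p x * dist x (σm x) ^ l) + (1 - θ) * (p x * dist x (σp x) ^ l))]
    rw [Finset.sum_add_distrib]
  have hqsV : ∑ s, qs s * V s = g lam0 := by
    have e1 : ∑ s, qs s * V s
        = θ * (∑ x, p x * V (σm x)) + (1 - θ) * (∑ x, p x * V (σp x)) := by
      calc ∑ s, qs s * V s = ∑ y, ∑ x, μs x y * V y := by
            refine Finset.sum_congr rfl fun y _ => ?_
            rw [hqs, Finset.sum_mul]
        _ = ∑ x, ∑ y, μs x y * V y := Finset.sum_comm
        _ = ∑ x, p x * (θ * V (σm x) + (1 - θ) * V (σp x)) :=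
            Finset.sum_congr rfl fun x _ => hrowsum (fun _ y => V y) x
        _ = θ * (∑ x, p x * V (σm x)) + (1 - θ) * (∑ x, p x * V (σp x)) := by
            rw [Finset.sum_congr rfl (fun x _ => by ring :
              ∀ x ∈ Finset.univ, p x * (θ * V (σm x) + (1 - θ) * V (σp x))
                = θ * (p x * V (σm x)) + (1 - θ) * (p x * V (σp x)))]
            rw [Finset.sum_add_distrib, ← Finset.mul_sum, ← Finset.mul_sum]
    have e2 : (∑ x, p x * V (σm x)) + lam0 * (c σm - δ ^ l) = g lam0 := by
      rw [← hGaff σm lam0]; exact hσmact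
    have e3 : (∑ x, p x * V (σp x)) + lam0 * (c σp - δ ^ l) = g lam0 := by
      rw [← hGaff σp lam0]; exact hσpact
    have e4 : (∑ x, p x * V (σm x)) = g lam0 - lam0 * (c σm - δ ^ l) := by linarith
    have e5 : (∑ x, p x * V (σp x)) = g lam0 - lam0 * (c σp - δ ^ l) := by linarith
    rw [e1, e4, e5]
    linear_combination -hcombo_eq
  -- feasibility of qs
  have hfeas : wassersteinDist l p qs ≤ δ := by
    set cost := ∑ x, ∑ y, μs x y * dist x y ^ l with hcostdef
    have hcost0 : (0:ℝ) ≤ cost :=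
      Finset.sum_nonneg fun x _ => Finset.sum_nonneg fun y _ =>
        mul_nonneg (hμs0 x y) (hdl0 x y)
    have hcostle : cost ≤ δ ^ l := by rw [hcost]; exact hcombo_le
    have hmem : cost ^ (1 / l) ∈ {w : ℝ | ∃ μ : S → S → ℝ,
        (∀ x y, 0 ≤ μ x y) ∧ (∀ x, ∑ y, μ x y = p x) ∧ (∀ y, ∑ x, μ x y = qs y) ∧
        w = (∑ x, ∑ y, μ x y * dist x y ^ l) ^ (1 / l)} :=
      ⟨μs, hμs0, hμsrow, fun y => rfl, rfl⟩
    have hbdd : BddBelow {w : ℝ | ∃ μ : S → S → ℝ,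
        (∀ x y, 0 ≤ μ x y) ∧ (∀ x, ∑ y, μ x y = p x) ∧ (∀ y, ∑ x, μ x y = qs y) ∧
        w = (∑ x, ∑ y, μ x y * dist x y ^ l) ^ (1 / l)} := by
      refine ⟨0, ?_⟩
      rintro w ⟨μ, hμ0, -, -, rfl⟩
      exact Real.rpow_nonneg (Finset.sum_nonneg fun x _ => Finset.sum_nonneg fun y _ =>
        mul_nonneg (hμ0 x y) (hdl0 x y)) _
    have h1 : wassersteinDist l p qs ≤ cost ^ (1 / l) := csInf_le hbdd hmem
    have h2 : cost ^ (1 / l) ≤ (δ ^ l) ^ (1 / l) :=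
      Real.rpow_le_rpow hcost0 hcostle (by positivity)
    have h3 : (δ ^ l : ℝ) ^ (1 / l) = δ := by
      rw [one_div, Real.rpow_rpow_inv hδ.le hlne]
    linarith
  -- final assembly
  set A := {z : ℝ | ∃ q : S → ℝ, ((∀ s, 0 ≤ q s) ∧ ∑ s, q s = 1) ∧
      wassersteinDist l p q ≤ δ ∧ z = ∑ s, q s * V s} with hA
  set B := {z : ℝ | ∃ lam : ℝ, 0 ≤ lam ∧ z = -lam * δ ^ l + ∑ x, p x * m x lam} with hB
  have hgB : ∀ lam : ℝ, 0 ≤ lam → g lam ∈ B := fun lam h => ⟨lam, h, rfl⟩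
  have hAmem : (∑ s, qs s * V s) ∈ A := ⟨qs, ⟨hqs0, hqs1⟩, hfeas, rfl⟩
  have hAne : A.Nonempty := ⟨_, hAmem⟩
  have hBne : B.Nonempty := ⟨g 0, hgB 0 le_rfl⟩
  have hweak : ∀ b ∈ B, ∀ a ∈ A, b ≤ a := by
    rintro b ⟨lam, hlam, rfl⟩ a ⟨q, ⟨hq0, hq1⟩, hqf, rfl⟩
    exact key q hq0 hq1 hqf lam hlam
  have hBddA : BddBelow A := ⟨g 0, fun a ha => hweak _ (hgB 0 le_rfl) a ha⟩
  have hBddB : BddAbove B := ⟨∑ s, qs s * V s, fun b hb => hweak b hb _ hAmem⟩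
  apply le_antisymm
  · calc sInf A ≤ ∑ s, qs s * V s := csInf_le hBddA hAmem
    _ = g lam0 := hqsV
    _ ≤ sSup B := le_csSup hBddB (hgB lam0 hlam0)
  · exact csSup_le hBne fun b hb => le_csInf hAne fun a ha => hweak b hb a ha
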